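/- Let T be a set of permutations and let kT1 denote the set of permutations obtained by replacing each π ∈ T of length m by the permutation of length m+2 given by (m+2), π^{+1}, 1. Then F_{kT1}(x)·(1 − x − x²·F_T(x)) = 1 as formal power series over ℚ, where F_S(x) = Σ_{n≥0} |I_n(3412, S)| xⁿ for a set S of patterns. -/

import Mathlib

/-- `π` (a sequence of length `n` with values in `Fin n`) contains the pattern `σ` of length `k`:
there is a strictly increasing choice of positions on which `π` has the same pairwise
comparisons as `σ`. -/
def Contains {n k : ℕ} (π : Fin n → Fin n) (σ : Fin k → Fin k) : Prop :=
  ∃ f : Fin k → Fin n, StrictMono f ∧ ∀ a b : Fin k, σ a < σ b ↔ π (f a) < π (f b)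

/-- `π` avoids the pattern `σ`. -/
def Avoids {n k : ℕ} (π : Fin n → Fin n) (σ : Fin k → Fin k) : Prop :=
  ¬ Contains π σ

/-- The pattern 3412, written 0-indexed. -/
def pat3412 : Fin 4 → Fin 4 := ![2, 3, 0, 1]

/-- The permutation `(m+2) σ^{+1} 1` of length `m+2` (written 0-indexed): first entry `m+2`,
then `σ` with every entry increased by `1`, then a final entry `1`. -/
def extBoth {m : ℕ} (σ : Fin m → Fin m) : Fin (m + 2) → Fin (m + 2) := fun i =>
  if h0 : (i : ℕ) = 0 then ⟨m + 1, by omega⟩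
  else if h1 : (i : ℕ) ≤ m then
    have hlt : (i : ℕ) - 1 < m := by omega
    ⟨(σ ⟨(i : ℕ) - 1, hlt⟩ : ℕ) + 1, by have := (σ ⟨(i : ℕ) - 1, hlt⟩).isLt; omega⟩
  else ⟨0, by omega⟩

/-- `π` avoids every pattern in the set `T` (patterns of arbitrary lengths). -/
def AvoidsAll {n : ℕ} (π : Fin n → Fin n) (T : Set ((m : ℕ) × (Fin m → Fin m))) : Prop :=
  ∀ σ ∈ T, Avoids π σ.2

/-- `F_T(x) = Σ_{n≥0} |I_n(3412, T)| xⁿ` for a set `T` of patterns. -/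
noncomputable def FSet (T : Set ((m : ℕ) × (Fin m → Fin m))) : PowerSeries ℚ :=
  PowerSeries.mk fun n =>
    (Nat.card {π : Fin n → Fin n //
      Function.Involutive π ∧ Avoids π pat3412 ∧ AvoidsAll π T} : ℚ)

/-- The operation taking a pattern `π` of length `m` to `(m+2) π^{+1} 1` of length `m+2`. -/
def kOne : ((m : ℕ) × (Fin m → Fin m)) → ((m : ℕ) × (Fin m → Fin m)) :=
  fun s => ⟨s.1 + 2, extBoth s.2⟩

namespace S14

theorem contains_trans {n k l : ℕ} {π : Fin n → Fin n} {α : Fin k → Fin k} {σ : Fin l → Fin l}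
    (h1 : Contains π α) (h2 : Contains α σ) : Contains π σ := by
  obtain ⟨f, hf, hfc⟩ := h1; obtain ⟨g, hg, hgc⟩ := h2
  exact ⟨f ∘ g, hf.comp hg, fun a b => (hgc a b).trans (hfc _ _)⟩

theorem contains_of_vals {n k : ℕ} {π : Fin n → Fin n} {σ : Fin k → Fin k}
    (f : Fin k → Fin n) (hmono : ∀ a b : Fin k, (a : ℕ) < b → (f a : ℕ) < f b)
    (hiff : ∀ a b : Fin k, ((σ a : ℕ) < σ b ↔ (π (f a) : ℕ) < π (f b))) :
    Contains π σ :=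
  ⟨f, fun a b hab => by rw [Fin.lt_def]; exact hmono a b hab,
    fun a b => by rw [Fin.lt_def, Fin.lt_def]; exact hiff a b⟩

theorem pat3412_val : ∀ i : Fin 4, (pat3412 i : ℕ) =
    if (i : ℕ) = 0 then 2 else if (i : ℕ) = 1 then 3 else if (i : ℕ) = 2 then 0 else 1 := by
  decide

theorem contains3412_intro {n : ℕ} {π : Fin n → Fin n} {p0 p1 p2 p3 : Fin n}
    (h01 : (p0 : ℕ) < p1) (h12 : (p1 : ℕ) < p2) (h23 : (p2 : ℕ) < p3)
    (v23 : (π p2 : ℕ) < π p3) (v30 : (π p3 : ℕ) < π p0) (v01 : (π p0 : ℕ) < π p1) :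
    Contains π pat3412 := by
  refine contains_of_vals
    (fun i => if (i : ℕ) = 0 then p0 else if (i : ℕ) = 1 then p1
      else if (i : ℕ) = 2 then p2 else p3) ?_ ?_
  · intro a b hab
    have := a.isLt; have := b.isLt
    split_ifs <;> omega
  · intro a b
    have := a.isLt; have := b.isLt
    rw [pat3412_val a, pat3412_val b]
    split_ifs <;> omega

theorem contains3412_elim {n : ℕ} {π : Fin n → Fin n} (h : Contains π pat3412) :
    ∃ p0 p1 p2 p3 : Fin n, (p0 : ℕ) < p1 ∧ (p1 : ℕ) < p2 ∧ (p2 : ℕ) < p3 ∧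
      (π p2 : ℕ) < π p3 ∧ (π p3 : ℕ) < π p0 ∧ (π p0 : ℕ) < π p1 := by
  obtain ⟨f, hf, hc⟩ := h
  refine ⟨f 0, f 1, f 2, f 3, hf (by decide), hf (by decide), hf (by decide), ?_, ?_, ?_⟩
  · exact (hc 2 3).mp (by decide)
  · exact (hc 3 0).mp (by decide)
  · exact (hc 0 1).mp (by decide)


theorem extBoth_val_zero {m : ℕ} (σ : Fin m → Fin m) (i : Fin (m + 2)) (h : (i : ℕ) = 0) :
    (extBoth σ i : ℕ) = m + 1 := by
  simp only [extBoth, dif_pos h]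

theorem extBoth_val_mid {m : ℕ} (σ : Fin m → Fin m) (i : Fin (m + 2))
    (h1 : 1 ≤ (i : ℕ)) (h2 : (i : ℕ) ≤ m) :
    (extBoth σ i : ℕ) = (σ ⟨(i : ℕ) - 1, by omega⟩ : ℕ) + 1 := by
  simp only [extBoth, dif_neg (by omega : ¬ (i : ℕ) = 0), dif_pos h2]

theorem extBoth_val_last {m : ℕ} (σ : Fin m → Fin m) (i : Fin (m + 2)) (h : (i : ℕ) = m + 1) :
    (extBoth σ i : ℕ) = 0 := by
  simp only [extBoth, dif_neg (by omega : ¬ (i : ℕ) = 0), dif_neg (by omega : ¬ (i : ℕ) ≤ m)]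

/-- Builder for occurrences of `extBoth σ`. -/
theorem contains_extBoth_intro {n m : ℕ} {π : Fin n → Fin n} {σ : Fin m → Fin m}
    (p q : Fin n) (g : Fin m → Fin n)
    (hpg : ∀ a, (p : ℕ) < g a) (hgq : ∀ a, (g a : ℕ) < q) (hpq : (p : ℕ) < q)
    (hg : ∀ a b : Fin m, (a : ℕ) < b → (g a : ℕ) < g b)
    (hvq : ∀ a, (π q : ℕ) < π (g a)) (hvp : ∀ a, (π (g a) : ℕ) < π p) (hvpq : (π q : ℕ) < π p)
    (hcmp : ∀ a b, (σ a : ℕ) < σ b ↔ (π (g a) : ℕ) < π (g b)) :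
    Contains π (extBoth σ) := by
  refine contains_of_vals
    (fun i => if h0 : (i : ℕ) = 0 then p else if h1 : (i : ℕ) ≤ m then g ⟨(i : ℕ) - 1, by omega⟩
      else q) ?_ ?_
  · intro a b hab
    have ha := a.isLt; have hb := b.isLt
    split_ifs with h1 h2 h3 h4 h5 h6 h7 <;>
      first
        | omega
        | (first | exact hpg _ | exact hgq _ | exact hpq | (apply hg; simp; omega))
  · intro a b
    have ha := a.isLt; have hb := b.isLt
    split_ifs with h1 h2 h3 h4 h5 h6 h7 <;>
      [skip; skip; skip; skip; skip; skip; skip; skip; skip] <;>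
      first
        | (rw [extBoth_val_zero σ a (by omega), extBoth_val_zero σ b (by omega)]; omega)
        | (rw [extBoth_val_zero σ a (by omega), extBoth_val_mid σ b (by omega) (by omega)]
           ; have := hvp ⟨(b : ℕ) - 1, by omega⟩
           ; have := (σ ⟨(b : ℕ) - 1, by omega⟩).isLt; omega)
        | (rw [extBoth_val_zero σ a (by omega), extBoth_val_last σ b (by omega)]; omega)
        | (rw [extBoth_val_mid σ a (by omega) (by omega), extBoth_val_zero σ b (by omega)]
           ; have := hvp ⟨(a : ℕ) - 1, by omega⟩
           ; have := (σ ⟨(a : ℕ) - 1, by omega⟩).isLt; omega)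
        | (rw [extBoth_val_mid σ a (by omega) (by omega), extBoth_val_mid σ b (by omega) (by omega)]
           ; have := hcmp ⟨(a : ℕ) - 1, by omega⟩ ⟨(b : ℕ) - 1, by omega⟩; omega)
        | (rw [extBoth_val_mid σ a (by omega) (by omega), extBoth_val_last σ b (by omega)]
           ; have := hvq ⟨(a : ℕ) - 1, by omega⟩; omega)
        | (rw [extBoth_val_last σ a (by omega), extBoth_val_zero σ b (by omega)]; omega)
        | (rw [extBoth_val_last σ a (by omega), extBoth_val_mid σ b (by omega) (by omega)]
           ; have := hvq ⟨(b : ℕ) - 1, by omega⟩; omega)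
        | (rw [extBoth_val_last σ a (by omega), extBoth_val_last σ b (by omega)]; omega)

/-- Unpacker for occurrences of `extBoth σ`. -/
theorem contains_extBoth_elim {n m : ℕ} {π : Fin n → Fin n} {σ : Fin m → Fin m}
    (h : Contains π (extBoth σ)) :
    ∃ (p q : Fin n) (g : Fin m → Fin n),
      (∀ a, (p : ℕ) < g a) ∧ (∀ a, (g a : ℕ) < q) ∧ (p : ℕ) < q ∧
      (∀ a b : Fin m, (a : ℕ) < b → (g a : ℕ) < g b) ∧
      (∀ a, (π q : ℕ) < π (g a)) ∧ (∀ a, (π (g a) : ℕ) < π p) ∧ (π q : ℕ) < π p ∧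
      (∀ a b, (σ a : ℕ) < σ b ↔ (π (g a) : ℕ) < π (g b)) := by
  obtain ⟨f, hf, hc⟩ := h
  have hσlt : ∀ a : Fin m, (σ a : ℕ) < m := fun a => (σ a).isLt
  have hfmono : ∀ a b : Fin (m + 2), (a : ℕ) < (b : ℕ) → (f a : ℕ) < f b := by
    intro a b hab; exact hf (by rwa [Fin.lt_def])
  have e0 : (extBoth σ (⟨0, by omega⟩ : Fin (m+2)) : ℕ) = m + 1 := extBoth_val_zero σ _ rfl
  have eL : (extBoth σ (⟨m+1, by omega⟩ : Fin (m+2)) : ℕ) = 0 := extBoth_val_last σ _ rfl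
  have eM : ∀ a : Fin m, (extBoth σ (⟨(a : ℕ) + 1, by omega⟩ : Fin (m+2)) : ℕ) = (σ a : ℕ) + 1 := by
    intro a
    rw [extBoth_val_mid σ _ (by simp) (by have := a.isLt; simp)]
    congr 1
  have key : ∀ a b : Fin (m + 2), (extBoth σ a : ℕ) < extBoth σ b ↔ (π (f a) : ℕ) < π (f b) := by
    intro a b
    have := hc a b; rw [Fin.lt_def, Fin.lt_def] at this; exact this
  refine ⟨f ⟨0, by omega⟩, f ⟨m+1, by omega⟩, fun a => f ⟨(a:ℕ)+1, by omega⟩,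
    ?_, ?_, ?_, ?_, ?_, ?_, ?_, ?_⟩
  · intro a; exact hfmono _ _ (by simp)
  · intro a; exact hfmono _ _ (by simpa using a.isLt)
  · exact hfmono _ _ (by simp)
  · intro a b hab; exact hfmono _ _ (by simpa using hab)
  · intro a; rw [← key]; rw [eL, eM]; omega
  · intro a; rw [← key]; rw [eM, e0]; have := hσlt a; omega
  · rw [← key]; rw [eL, e0]; omega
  · intro a b; rw [← key]; rw [eM, eM]; constructor <;> intro <;> omega

/-- `extBoth` is monotone with respect to pattern containment. -/
theorem extBoth_mono {m m' : ℕ} {τ : Fin m → Fin m} {σ : Fin m' → Fin m'}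
    (h : Contains τ σ) : Contains (extBoth τ) (extBoth σ) := by
  obtain ⟨f, hf, hc⟩ := h
  have hfmono : ∀ a b : Fin m', (a : ℕ) < (b : ℕ) → (f a : ℕ) < f b := by
    intro a b hab; exact hf (by rwa [Fin.lt_def])
  have eM : ∀ a : Fin m, (extBoth τ (⟨(a : ℕ) + 1, by omega⟩ : Fin (m+2)) : ℕ) = (τ a : ℕ) + 1 := by
    intro a
    rw [extBoth_val_mid τ _ (by simp) (by have := a.isLt; simp)]
    congr 1
  have e0 : (extBoth τ (⟨0, by omega⟩ : Fin (m+2)) : ℕ) = m + 1 := extBoth_val_zero τ _ rfl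
  have eL : (extBoth τ (⟨m+1, by omega⟩ : Fin (m+2)) : ℕ) = 0 := extBoth_val_last τ _ rfl
  refine contains_extBoth_intro ⟨0, by omega⟩ ⟨m+1, by omega⟩
    (fun a => ⟨(f a : ℕ) + 1, by have := (f a).isLt; omega⟩) ?_ ?_ ?_ ?_ ?_ ?_ ?_ ?_
  · intro a; simp
  · intro a; simpa using (f a).isLt
  · simp
  · intro a b hab; simpa using hfmono a b hab
  · intro a
    rw [eL, eM (f a)]; omega
  · intro a
    rw [e0, eM (f a)]; have := (τ (f a)).isLt; omega
  · rw [eL, e0]; omega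
  · intro a b
    rw [eM (f a), eM (f b)]
    have := hc a b; rw [Fin.lt_def, Fin.lt_def] at this
    constructor <;> intro <;> omega


/-- Structural lemma: in a 3412-avoiding involution with `π 0 = K ≥ 1`, the middle
positions `1..K-1` have values in `1..K-1` and positions `> K` have values `> K`. -/
theorem struct_mid {n : ℕ} {π : Fin (n+1) → Fin (n+1)}
    (hinv : Function.Involutive π) (hav : Avoids π pat3412)
    (i : Fin (n+1)) (h1 : 1 ≤ (i : ℕ)) (h2 : (i : ℕ) < (π 0 : ℕ)) :
    1 ≤ (π i : ℕ) ∧ (π i : ℕ) < (π 0 : ℕ) := by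
  have hinj : Function.Injective π := hinv.injective
  have hne0 : (π i : ℕ) ≠ 0 := by
    intro h
    have : π i = π (π 0) := by
      rw [hinv 0]; exact Fin.ext h
    have := hinj this
    rw [this] at h2
    exact absurd h2 (lt_irrefl _)
  have hneK : (π i : ℕ) ≠ (π 0 : ℕ) := by
    intro h
    have : π i = π 0 := Fin.ext h
    have := hinj this
    rw [this] at h1; simp at h1
  rcases lt_or_gt_of_ne hneK with hlt | hgt
  · exact ⟨by omega, hlt⟩
  · exfalso
    apply hav
    -- positions 0 < i < π 0 < π i, values (π 0, π i, 0, i)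
    refine contains3412_intro (p0 := 0) (p1 := i) (p2 := π 0) (p3 := π i)
      (by rw [Fin.val_zero]; omega) h2 hgt ?_ ?_ ?_
    · rw [hinv 0, hinv i, Fin.val_zero]; omega
    · rw [hinv i]; exact h2
    · simpa using hgt

theorem struct_zero {n : ℕ} {π : Fin (n+1) → Fin (n+1)} (hinv : Function.Involutive π) :
    (π (π 0) : ℕ) = 0 := by rw [hinv 0]; rfl

theorem struct_tail {n : ℕ} {π : Fin (n+1) → Fin (n+1)}
    (hinv : Function.Involutive π) (hav : Avoids π pat3412)
    (i : Fin (n+1)) (h1 : (π 0 : ℕ) < (i : ℕ)) :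
    (π 0 : ℕ) < (π i : ℕ) := by
  have hinj : Function.Injective π := hinv.injective
  have hne0 : (π i : ℕ) ≠ 0 := by
    intro h
    have : π i = π (π 0) := by rw [hinv 0]; exact Fin.ext h
    have := hinj this
    rw [this] at h1
    exact absurd h1 (lt_irrefl _)
  have hneK : (π i : ℕ) ≠ (π 0 : ℕ) := by
    intro h
    have := hinj (Fin.ext h : π i = π 0)
    rw [this] at h1; simp at h1
  rcases lt_or_gt_of_ne hneK with hlt | hgt
  · exfalso
    have h1' : 1 ≤ (π i : ℕ) := by omega
    have := struct_mid hinv hav (π i) h1' hlt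
    rw [hinv i] at this
    omega
  · exact hgt

/-- Glue `(m+1) τ⁺ 0 ρ⁺⁺` : the block permutation with first entry `m+1`, middle `τ+1`,
entry `0` at position `m+1`, and `ρ` shifted by `m+2` at the end. -/
def glue {m j : ℕ} (τ : Fin m → Fin m) (ρ : Fin j → Fin j) :
    Fin (m+1+j+1) → Fin (m+1+j+1) := fun i =>
  if h0 : (i : ℕ) = 0 then ⟨m+1, by omega⟩
  else if hm : (i : ℕ) ≤ m then
    ⟨(τ ⟨(i : ℕ) - 1, by omega⟩ : ℕ) + 1, by have := (τ ⟨(i : ℕ) - 1, by omega⟩).isLt; omega⟩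
  else if hK : (i : ℕ) = m + 1 then ⟨0, by omega⟩
  else ⟨(ρ ⟨(i : ℕ) - m - 2, by have := i.isLt; omega⟩ : ℕ) + m + 2,
    by have := (ρ ⟨(i : ℕ) - m - 2, by have := i.isLt; omega⟩).isLt; have := i.isLt; omega⟩

section GlueVal

variable {m j : ℕ} (τ : Fin m → Fin m) (ρ : Fin j → Fin j)

theorem glue_val_zero (i : Fin (m+1+j+1)) (h : (i : ℕ) = 0) : (glue τ ρ i : ℕ) = m + 1 := by
  simp only [glue, dif_pos h]

theorem glue_val_mid (i : Fin (m+1+j+1)) (h1 : 1 ≤ (i : ℕ)) (h2 : (i : ℕ) ≤ m) :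
    (glue τ ρ i : ℕ) = (τ ⟨(i : ℕ) - 1, by omega⟩ : ℕ) + 1 := by
  simp only [glue, dif_neg (by omega : ¬ (i : ℕ) = 0), dif_pos h2]

theorem glue_val_K (i : Fin (m+1+j+1)) (h : (i : ℕ) = m + 1) : (glue τ ρ i : ℕ) = 0 := by
  simp only [glue, dif_neg (by omega : ¬ (i : ℕ) = 0), dif_neg (by omega : ¬ (i : ℕ) ≤ m),
    dif_pos h]

theorem glue_val_tail (i : Fin (m+1+j+1)) (h : m + 1 < (i : ℕ)) :
    (glue τ ρ i : ℕ) = (ρ ⟨(i : ℕ) - m - 2, by have := i.isLt; omega⟩ : ℕ) + m + 2 := by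
  simp only [glue, dif_neg (by omega : ¬ (i : ℕ) = 0), dif_neg (by omega : ¬ (i : ℕ) ≤ m),
    dif_neg (by omega : ¬ (i : ℕ) = m + 1)]

theorem glue_val_mid_bounds (i : Fin (m+1+j+1)) (h1 : 1 ≤ (i : ℕ)) (h2 : (i : ℕ) ≤ m) :
    1 ≤ (glue τ ρ i : ℕ) ∧ (glue τ ρ i : ℕ) ≤ m := by
  rw [glue_val_mid τ ρ i h1 h2]
  have := (τ ⟨(i : ℕ) - 1, by omega⟩).isLt
  omega

theorem glue_val_tail_bounds (i : Fin (m+1+j+1)) (h : m + 1 < (i : ℕ)) :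
    m + 2 ≤ (glue τ ρ i : ℕ) := by
  rw [glue_val_tail τ ρ i h]; omega

theorem glue_val_mid' (i : Fin (m+1+j+1)) (a : Fin m) (ha : (i : ℕ) = (a : ℕ) + 1) :
    (glue τ ρ i : ℕ) = (τ a : ℕ) + 1 := by
  rw [glue_val_mid τ ρ i (by omega) (by have := a.isLt; omega)]
  have harg : (⟨(i : ℕ) - 1, by omega⟩ : Fin m) = a :=
    Fin.ext (show (i : ℕ) - 1 = (a : ℕ) by omega)
  rw [harg]

theorem glue_val_tail' (i : Fin (m+1+j+1)) (b : Fin j) (hb : (i : ℕ) = (b : ℕ) + m + 2) :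
    (glue τ ρ i : ℕ) = (ρ b : ℕ) + m + 2 := by
  rw [glue_val_tail τ ρ i (by omega)]
  have harg : (⟨(i : ℕ) - m - 2, by have := i.isLt; omega⟩ : Fin j) = b :=
    Fin.ext (show (i : ℕ) - m - 2 = (b : ℕ) by omega)
  rw [harg]

theorem glue_involutive (hτ : Function.Involutive τ) (hρ : Function.Involutive ρ) :
    Function.Involutive (glue τ ρ) := by
  intro i
  rcases Nat.lt_or_ge (i : ℕ) 1 with h | h
  · have h0 : (i : ℕ) = 0 := by omega
    have e1 : (glue τ ρ i : ℕ) = m + 1 := glue_val_zero τ ρ i h0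
    have e2 : (glue τ ρ (glue τ ρ i) : ℕ) = 0 := glue_val_K τ ρ _ e1
    exact Fin.ext (by omega)
  rcases Nat.lt_or_ge (m : ℕ) (i : ℕ) with h' | h'
  · rcases Nat.lt_or_ge (m + 1) (i : ℕ) with h'' | h''
    · -- tail
      have hbi := i.isLt
      set b : Fin j := ⟨(i : ℕ) - m - 2, by omega⟩ with hbdef
      have hb : (i : ℕ) = (b : ℕ) + m + 2 := by rw [hbdef]; simp; omega
      have e1 : (glue τ ρ i : ℕ) = (ρ b : ℕ) + m + 2 := glue_val_tail' τ ρ i b hb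
      have e2 : (glue τ ρ (glue τ ρ i) : ℕ) = (ρ (ρ b) : ℕ) + m + 2 :=
        glue_val_tail' τ ρ _ (ρ b) e1
      rw [hρ b] at e2
      exact Fin.ext (by omega)
    · -- i = m+1
      have h0 : (i : ℕ) = m + 1 := by omega
      have e1 : (glue τ ρ i : ℕ) = 0 := glue_val_K τ ρ i h0
      have e2 : (glue τ ρ (glue τ ρ i) : ℕ) = m + 1 := glue_val_zero τ ρ _ e1
      exact Fin.ext (by omega)
  · -- middle
    set a : Fin m := ⟨(i : ℕ) - 1, by omega⟩ with hadef
    have ha : (i : ℕ) = (a : ℕ) + 1 := by rw [hadef]; simp; omega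
    have e1 : (glue τ ρ i : ℕ) = (τ a : ℕ) + 1 := glue_val_mid' τ ρ i a ha
    have e2 : (glue τ ρ (glue τ ρ i) : ℕ) = (τ (τ a) : ℕ) + 1 :=
      glue_val_mid' τ ρ _ (τ a) e1
    rw [hτ a] at e2
    exact Fin.ext (by omega)

theorem glue_avoids_3412 (hτ : Avoids τ pat3412) (hρ : Avoids ρ pat3412) :
    Avoids (glue τ ρ) pat3412 := by
  intro h
  obtain ⟨p0, p1, p2, p3, h01, h12, h23, v23, v30, v01⟩ := contains3412_elim h
  have hb0 := p0.isLt; have hb1 := p1.isLt; have hb2 := p2.isLt; have hb3 := p3.isLt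
  rcases Nat.lt_or_ge (p0 : ℕ) 1 with hc | hc
  · -- p0 = 0, value m+1 : impossible
    have e0 : (glue τ ρ p0 : ℕ) = m + 1 := glue_val_zero τ ρ p0 (by omega)
    -- p1 must be in the tail
    have hp1 : m + 1 < (p1 : ℕ) := by
      by_contra hle
      push_neg at hle
      rcases Nat.lt_or_ge (p1 : ℕ) (m+1) with hx | hx
      · have := glue_val_mid_bounds τ ρ p1 (by omega) (by omega)
        omega
      · have : (glue τ ρ p1 : ℕ) = 0 := glue_val_K τ ρ p1 (by omega)
        omega
    have := glue_val_tail_bounds τ ρ p3 (by omega)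
    omega
  rcases Nat.lt_or_ge (m : ℕ) (p0 : ℕ) with hc' | hc'
  · rcases Nat.lt_or_ge (m + 1) (p0 : ℕ) with hc'' | hc''
    · -- p0 in the tail: everything in the tail
      have e0 := glue_val_tail τ ρ p0 hc''
      have e1 := glue_val_tail τ ρ p1 (by omega)
      have e2 := glue_val_tail τ ρ p2 (by omega)
      have e3 := glue_val_tail τ ρ p3 (by omega)
      apply hρ
      exact contains3412_intro
        (p0 := ⟨(p0 : ℕ) - m - 2, by omega⟩) (p1 := ⟨(p1 : ℕ) - m - 2, by omega⟩)
        (p2 := ⟨(p2 : ℕ) - m - 2, by omega⟩) (p3 := ⟨(p3 : ℕ) - m - 2, by omega⟩)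
        (by simp; omega) (by simp; omega) (by simp; omega)
        (by omega) (by omega) (by omega)
    · -- p0 = m+1, value 0, but v30 needs something below it
      have e0 : (glue τ ρ p0 : ℕ) = 0 := glue_val_K τ ρ p0 (by omega)
      omega
  · -- p0 in the middle
    have e0 := glue_val_mid τ ρ p0 (by omega) (by omega)
    have b0 := glue_val_mid_bounds τ ρ p0 (by omega) (by omega)
    -- p1 in the middle
    have hp1 : (p1 : ℕ) ≤ m := by
      by_contra hle
      push_neg at hle
      rcases Nat.lt_or_ge (m + 1) (p1 : ℕ) with hx | hx
      · have := glue_val_tail_bounds τ ρ p3 (by omega)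
        omega
      · have : (glue τ ρ p1 : ℕ) = 0 := glue_val_K τ ρ p1 (by omega)
        omega
    have e1 := glue_val_mid τ ρ p1 (by omega) hp1
    have b1 := glue_val_mid_bounds τ ρ p1 (by omega) hp1
    -- p2 in the middle
    have hp2 : (p2 : ℕ) ≤ m := by
      by_contra hle
      push_neg at hle
      rcases Nat.lt_or_ge (m + 1) (p2 : ℕ) with hx | hx
      · have := glue_val_tail_bounds τ ρ p2 hx
        omega
      · have := glue_val_tail_bounds τ ρ p3 (by omega)
        omega
    have e2 := glue_val_mid τ ρ p2 (by omega) hp2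
    have b2 := glue_val_mid_bounds τ ρ p2 (by omega) hp2
    -- p3 in the middle
    have hp3 : (p3 : ℕ) ≤ m := by
      by_contra hle
      push_neg at hle
      rcases Nat.lt_or_ge (m + 1) (p3 : ℕ) with hx | hx
      · have := glue_val_tail_bounds τ ρ p3 hx
        omega
      · have : (glue τ ρ p3 : ℕ) = 0 := glue_val_K τ ρ p3 (by omega)
        omega
    have e3 := glue_val_mid τ ρ p3 (by omega) hp3
    apply hτ
    exact contains3412_intro
      (p0 := ⟨(p0 : ℕ) - 1, by omega⟩) (p1 := ⟨(p1 : ℕ) - 1, by omega⟩)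
      (p2 := ⟨(p2 : ℕ) - 1, by omega⟩) (p3 := ⟨(p3 : ℕ) - 1, by omega⟩)
      (by simp; omega) (by simp; omega) (by simp; omega)
      (by omega) (by omega) (by omega)

/-- If `glue τ ρ` contains `extBoth σ`, then `τ` contains `σ` or `ρ` contains `extBoth σ`. -/
theorem glue_contains_extBoth {m j m' : ℕ} {τ : Fin m → Fin m} {ρ : Fin j → Fin j}
    {σ : Fin m' → Fin m'} (h : Contains (glue τ ρ) (extBoth σ)) :
    Contains τ σ ∨ Contains ρ (extBoth σ) := by
  obtain ⟨p, q, g, hpg, hgq, hpq, hg, hvq, hvp, hvpq, hcmp⟩ := contains_extBoth_elim h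
  have hbp := p.isLt; have hbq := q.isLt
  rcases Nat.lt_or_ge (m + 1) (p : ℕ) with hc | hc
  · -- p in tail : whole occurrence in ρ
    right
    have hgt : ∀ a, m + 1 < (g a : ℕ) := fun a => by have := hpg a; omega
    set P : Fin j := ⟨(p : ℕ) - m - 2, by omega⟩ with hP
    set Q : Fin j := ⟨(q : ℕ) - m - 2, by omega⟩ with hQ
    set G : Fin m' → Fin j :=
      fun a => ⟨(g a : ℕ) - m - 2, by have := (g a).isLt; omega⟩ with hG
    have hPv : (P : ℕ) = (p : ℕ) - m - 2 := by rw [hP]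
    have hQv : (Q : ℕ) = (q : ℕ) - m - 2 := by rw [hQ]
    have hGv : ∀ a, (G a : ℕ) = (g a : ℕ) - m - 2 := fun a => by rw [hG]
    have ep : (glue τ ρ p : ℕ) = (ρ P : ℕ) + m + 2 :=
      glue_val_tail' τ ρ p P (by rw [hPv]; omega)
    have eq' : (glue τ ρ q : ℕ) = (ρ Q : ℕ) + m + 2 :=
      glue_val_tail' τ ρ q Q (by rw [hQv]; omega)
    have eg : ∀ a, (glue τ ρ (g a) : ℕ) = (ρ (G a) : ℕ) + m + 2 :=
      fun a => glue_val_tail' τ ρ (g a) (G a) (by rw [hGv a]; have := hgt a; omega)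
    refine contains_extBoth_intro P Q G ?_ ?_ ?_ ?_ ?_ ?_ ?_ ?_
    · intro a; have := hpg a; have := hgt a; rw [hPv, hGv a]; omega
    · intro a; have := hgq a; have := hgt a; rw [hQv, hGv a]; omega
    · rw [hPv, hQv]; omega
    · intro a b hab; have := hg a b hab; have := hgt a; have := hgt b
      rw [hGv a, hGv b]; omega
    · intro a; have := hvq a; rw [eq', eg a] at this; omega
    · intro a; have := hvp a; rw [ep, eg a] at this; omega
    · have := hvpq; rw [ep, eq'] at this; omega
    · intro a b
      have := hcmp a b; rw [eg a, eg b] at this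
      constructor <;> intro <;> omega
  · -- p at position ≤ m+1
    left
    rcases Nat.lt_or_ge (p : ℕ) (m + 1) with hc2 | hc2
    · -- p = 0 or p in middle: value of p is at most m+1, so every g a is in the middle
      have hvpval : (glue τ ρ p : ℕ) ≤ m + 1 := by
        rcases Nat.lt_or_ge (p : ℕ) 1 with hx | hx
        · rw [glue_val_zero τ ρ p (by omega)]
        · have := glue_val_mid_bounds τ ρ p (by omega) (by omega)
          omega
      have hga : ∀ a, 1 ≤ (g a : ℕ) ∧ (g a : ℕ) ≤ m := by
        intro a
        have h1 : 1 ≤ (g a : ℕ) := by have := hpg a; omega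
        refine ⟨h1, ?_⟩
        by_contra hle
        push_neg at hle
        rcases Nat.lt_or_ge (m + 1) (g a : ℕ) with hx | hx
        · have := glue_val_tail_bounds τ ρ (g a) hx
          have := hvp a
          omega
        · have : (glue τ ρ (g a) : ℕ) = 0 := glue_val_K τ ρ (g a) (by omega)
          have := hvq a
          omega
      set F : Fin m' → Fin m :=
        fun a => ⟨(g a : ℕ) - 1, by have := hga a; omega⟩ with hF
      have hFv : ∀ a, (F a : ℕ) = (g a : ℕ) - 1 := fun a => by rw [hF]
      have eg : ∀ a, (glue τ ρ (g a) : ℕ) = (τ (F a) : ℕ) + 1 :=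
        fun a => glue_val_mid' τ ρ (g a) (F a) (by rw [hFv a]; have := hga a; omega)
      refine contains_of_vals F ?_ ?_
      · intro a b hab
        have := hg a b hab; have := hga a; have := hga b
        rw [hFv a, hFv b]; omega
      · intro a b
        have := hcmp a b; rw [eg a, eg b] at this
        constructor <;> intro <;> omega
    · -- p = m+1 : value 0, contradiction with hvpq
      exfalso
      have : (glue τ ρ p : ℕ) = 0 := glue_val_K τ ρ p (by omega)
      omega

end GlueVal

/-- The middle block of a decomposable `π`. -/
def midOf {m j : ℕ} (π : Fin (m+1+j+1) → Fin (m+1+j+1)) : Fin m → Fin m :=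
  fun a => ⟨((π ⟨(a : ℕ) + 1, by have := a.isLt; omega⟩ : ℕ) - 1) % m,
    Nat.mod_lt _ (by have := a.isLt; omega)⟩

/-- The tail block of a decomposable `π`. -/
def tailOf {m j : ℕ} (π : Fin (m+1+j+1) → Fin (m+1+j+1)) : Fin j → Fin j :=
  fun b => ⟨((π ⟨(b : ℕ) + m + 2, by have := b.isLt; omega⟩ : ℕ) - m - 2) % j,
    Nat.mod_lt _ (by have := b.isLt; omega)⟩

section Decomp

variable {m j : ℕ} {π : Fin (m+1+j+1) → Fin (m+1+j+1)}
  (hinv : Function.Involutive π) (hav : Avoids π pat3412) (hK : (π 0 : ℕ) = m + 1)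

include hinv hav hK

theorem midOf_val (a : Fin m) :
    (midOf π a : ℕ) + 1 = (π ⟨(a : ℕ) + 1, by have := a.isLt; omega⟩ : ℕ) := by
  have hm := struct_mid (n := m+1+j) hinv hav ⟨(a : ℕ) + 1, by have := a.isLt; omega⟩
    (by simp) (by have := a.isLt; simp; omega)
  have hma := a.isLt
  show ((π ⟨(a : ℕ) + 1, _⟩ : ℕ) - 1) % m + 1 = _
  rw [Nat.mod_eq_of_lt (by omega)]
  omega

theorem midOf_val_bounds (a : Fin m) :
    1 ≤ (π ⟨(a : ℕ) + 1, by have := a.isLt; omega⟩ : ℕ) ∧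
    (π ⟨(a : ℕ) + 1, by have := a.isLt; omega⟩ : ℕ) ≤ m := by
  have hm := struct_mid (n := m+1+j) hinv hav ⟨(a : ℕ) + 1, by have := a.isLt; omega⟩
    (by simp) (by have := a.isLt; simp; omega)
  omega

theorem tailOf_val (b : Fin j) :
    (tailOf π b : ℕ) + m + 2 = (π ⟨(b : ℕ) + m + 2, by have := b.isLt; omega⟩ : ℕ) := by
  have hm := struct_tail (n := m+1+j) hinv hav ⟨(b : ℕ) + m + 2, by have := b.isLt; omega⟩
    (by simp; omega)
  have hlt := (π ⟨(b : ℕ) + m + 2, by have := b.isLt; omega⟩).isLt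
  show ((π ⟨(b : ℕ) + m + 2, _⟩ : ℕ) - m - 2) % j + m + 2 = _
  rw [Nat.mod_eq_of_lt (by omega)]
  omega

theorem pos_K_val : (π ⟨m + 1, by omega⟩ : ℕ) = 0 := by
  have h0 : π 0 = ⟨m + 1, by omega⟩ := Fin.ext hK
  have := hinv 0
  rw [h0] at this
  rw [this]
  simp

theorem midOf_involutive : Function.Involutive (midOf π) := by
  intro a
  have h1 := midOf_val hinv hav hK a
  have h2 := midOf_val hinv hav hK (midOf π a)
  have harg : (⟨(midOf π a : ℕ) + 1, by have := (midOf π a).isLt; omega⟩ : Fin (m+1+j+1)) =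
      π ⟨(a : ℕ) + 1, by have := a.isLt; omega⟩ := Fin.ext h1
  rw [harg, hinv] at h2
  exact Fin.ext (by simpa using h2)

theorem tailOf_involutive : Function.Involutive (tailOf π) := by
  intro b
  have h1 := tailOf_val hinv hav hK b
  have h2 := tailOf_val hinv hav hK (tailOf π b)
  have harg : (⟨(tailOf π b : ℕ) + m + 2, by have := (tailOf π b).isLt; omega⟩ :
      Fin (m+1+j+1)) = π ⟨(b : ℕ) + m + 2, by have := b.isLt; omega⟩ := Fin.ext h1
  rw [harg, hinv] at h2
  exact Fin.ext (by simpa using h2)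

theorem contains_midOf : Contains π (midOf π) := by
  refine contains_of_vals (fun a => ⟨(a : ℕ) + 1, by have := a.isLt; omega⟩) ?_ ?_
  · intro a b hab; simpa using hab
  · intro a b
    have h1 := midOf_val hinv hav hK a
    have h2 := midOf_val hinv hav hK b
    omega

theorem contains_tailOf : Contains π (tailOf π) := by
  refine contains_of_vals (fun b => ⟨(b : ℕ) + m + 2, by have := b.isLt; omega⟩) ?_ ?_
  · intro a b hab; simpa using hab
  · intro a b
    have h1 := tailOf_val hinv hav hK a
    have h2 := tailOf_val hinv hav hK b
    omega

theorem contains_extBoth_midOf : Contains π (extBoth (midOf π)) := by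
  refine contains_extBoth_intro 0 ⟨m + 1, by omega⟩
    (fun a => ⟨(a : ℕ) + 1, by have := a.isLt; omega⟩) ?_ ?_ ?_ ?_ ?_ ?_ ?_ ?_
  · intro a; show ((0 : Fin (m+1+j+1)) : ℕ) < (a : ℕ) + 1; simp
  · intro a; show (a : ℕ) + 1 < m + 1; have := a.isLt; omega
  · show ((0 : Fin (m+1+j+1)) : ℕ) < m + 1; simp
  · intro a b hab; show (a : ℕ) + 1 < (b : ℕ) + 1; omega
  · intro a
    have h1 := midOf_val hinv hav hK a
    have h0 := pos_K_val hinv hav hK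
    omega
  · intro a
    have h1 := midOf_val hinv hav hK a
    have h2 := midOf_val_bounds hinv hav hK a
    omega
  · have h0 := pos_K_val hinv hav hK
    omega
  · intro a b
    have h1 := midOf_val hinv hav hK a
    have h2 := midOf_val hinv hav hK b
    omega

end Decomp

/-- The main fiber equivalence: elements of the fiber `π 0 = m+1` correspond to pairs. -/
noncomputable def fiberEquiv (T : Set ((m : ℕ) × (Fin m → Fin m))) (m j : ℕ) :
    {π : Fin (m+1+j+1) → Fin (m+1+j+1) //
        (Function.Involutive π ∧ Avoids π pat3412 ∧ AvoidsAll π (kOne '' T)) ∧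
          (π 0 : ℕ) = m + 1} ≃
    {τ : Fin m → Fin m // Function.Involutive τ ∧ Avoids τ pat3412 ∧ AvoidsAll τ T} ×
    {ρ : Fin j → Fin j //
        Function.Involutive ρ ∧ Avoids ρ pat3412 ∧ AvoidsAll ρ (kOne '' T)} where
  toFun x := by
    obtain ⟨π, ⟨hinv, hav, hall⟩, hK⟩ := x
    refine ⟨⟨midOf π, midOf_involutive hinv hav hK, ?_, ?_⟩,
            ⟨tailOf π, tailOf_involutive hinv hav hK, ?_, ?_⟩⟩
    · exact fun hcon => hav (contains_trans (contains_midOf hinv hav hK) hcon)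
    · intro s hs hcon
      exact hall (kOne s) ⟨s, hs, rfl⟩
        (contains_trans (contains_extBoth_midOf hinv hav hK) (extBoth_mono hcon))
    · exact fun hcon => hav (contains_trans (contains_tailOf hinv hav hK) hcon)
    · intro s hs hcon
      exact hall s hs (contains_trans (contains_tailOf hinv hav hK) hcon)
  invFun x := by
    obtain ⟨⟨τ, hτi, hτa, hτT⟩, ⟨ρ, hρi, hρa, hρT⟩⟩ := x
    refine ⟨glue τ ρ, ⟨glue_involutive τ ρ hτi hρi, glue_avoids_3412 τ ρ hτa hρa, ?_⟩,
      glue_val_zero τ ρ 0 rfl⟩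
    intro s hs hcon
    obtain ⟨t, ht, rfl⟩ := hs
    rcases glue_contains_extBoth hcon with h | h
    · exact hτT t ht h
    · exact hρT (kOne t) ⟨t, ht, rfl⟩ h
  left_inv := by
    rintro ⟨π, ⟨hinv, hav, hall⟩, hK⟩
    apply Subtype.ext
    funext i
    apply Fin.ext
    show (glue (midOf π) (tailOf π) i : ℕ) = (π i : ℕ)
    have hbi := i.isLt
    rcases Nat.lt_or_ge (i : ℕ) 1 with h | h
    · rw [glue_val_zero _ _ i (by omega)]
      have : i = 0 := Fin.ext (by simpa using (by omega : (i : ℕ) = 0))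
      rw [this, hK]
    rcases Nat.lt_or_ge (m : ℕ) (i : ℕ) with h' | h'
    · rcases Nat.lt_or_ge (m + 1) (i : ℕ) with h'' | h''
      · rw [glue_val_tail' _ _ i ⟨(i : ℕ) - m - 2, by omega⟩ (by simp; omega)]
        have h1 := tailOf_val hinv hav hK ⟨(i : ℕ) - m - 2, by omega⟩
        have harg : (⟨((⟨(i : ℕ) - m - 2, by omega⟩ : Fin j) : ℕ) + m + 2,
            by have := (⟨(i : ℕ) - m - 2, by omega⟩ : Fin j).isLt; omega⟩ :
            Fin (m+1+j+1)) = i := Fin.ext (by simp; omega)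
        rw [harg] at h1
        omega
      · rw [glue_val_K _ _ i (by omega)]
        have h1 := pos_K_val hinv hav hK
        have : i = ⟨m + 1, by omega⟩ := Fin.ext (by simp; omega)
        rw [this]
        omega
    · rw [glue_val_mid' _ _ i ⟨(i : ℕ) - 1, by omega⟩ (by simp; omega)]
      have h1 := midOf_val hinv hav hK ⟨(i : ℕ) - 1, by omega⟩
      have harg : (⟨((⟨(i : ℕ) - 1, by omega⟩ : Fin m) : ℕ) + 1,
          by have := (⟨(i : ℕ) - 1, by omega⟩ : Fin m).isLt; omega⟩ :
          Fin (m+1+j+1)) = i := Fin.ext (by simp; omega)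
      rw [harg] at h1
      omega
  right_inv := by
    rintro ⟨⟨τ, hτi, hτa, hτT⟩, ⟨ρ, hρi, hρa, hρT⟩⟩
    refine Prod.ext (Subtype.ext ?_) (Subtype.ext ?_)
    · funext a
      apply Fin.ext
      show ((glue τ ρ ⟨(a : ℕ) + 1, _⟩ : ℕ) - 1) % m = (τ a : ℕ)
      rw [glue_val_mid' τ ρ _ a (by simp)]
      rw [show ((τ a : ℕ) + 1 - 1) = (τ a : ℕ) by omega]
      exact Nat.mod_eq_of_lt (τ a).isLt
    · funext b
      apply Fin.ext
      show ((glue τ ρ ⟨(b : ℕ) + m + 2, _⟩ : ℕ) - m - 2) % j = (ρ b : ℕ)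
      rw [glue_val_tail' τ ρ _ b (by simp)]
      rw [show ((ρ b : ℕ) + m + 2 - m - 2) = (ρ b : ℕ) by omega]
      exact Nat.mod_eq_of_lt (ρ b).isLt

/-- The first entry of `σ` is not its minimum. -/
def NMF {k : ℕ} (σ : Fin k → Fin k) : Prop :=
  ∃ (h : 0 < k) (b : Fin k), (σ b : ℕ) < σ ⟨0, h⟩

theorem nmf_pat3412 : NMF pat3412 := ⟨by omega, ⟨2, by omega⟩, by decide⟩

theorem nmf_extBoth {m : ℕ} (σ : Fin m → Fin m) : NMF (extBoth σ) := by
  refine ⟨by omega, ⟨m + 1, by omega⟩, ?_⟩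
  rw [extBoth_val_last σ _ rfl, extBoth_val_zero σ _ rfl]
  omega

def shrink {n : ℕ} (π : Fin (n+1) → Fin (n+1)) : Fin n → Fin n :=
  fun a => ⟨((π ⟨(a : ℕ) + 1, by have := a.isLt; omega⟩ : ℕ) - 1) % n,
    Nat.mod_lt _ (by have := a.isLt; omega)⟩

def ext0 {n : ℕ} (π' : Fin n → Fin n) : Fin (n+1) → Fin (n+1) := fun i =>
  if h : (i : ℕ) = 0 then ⟨0, by omega⟩
  else ⟨(π' ⟨(i : ℕ) - 1, by have := i.isLt; omega⟩ : ℕ) + 1,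
    by have := (π' ⟨(i : ℕ) - 1, by have := i.isLt; omega⟩).isLt; omega⟩

theorem ext0_val_zero {n : ℕ} (π' : Fin n → Fin n) (i : Fin (n+1)) (h : (i : ℕ) = 0) :
    (ext0 π' i : ℕ) = 0 := by simp only [ext0, dif_pos h]

theorem ext0_val_pos {n : ℕ} (π' : Fin n → Fin n) (i : Fin (n+1)) (a : Fin n)
    (ha : (i : ℕ) = (a : ℕ) + 1) : (ext0 π' i : ℕ) = (π' a : ℕ) + 1 := by
  simp only [ext0, dif_neg (by omega : ¬ (i : ℕ) = 0)]
  have harg : (⟨(i : ℕ) - 1, by have := i.isLt; omega⟩ : Fin n) = a :=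
    Fin.ext (show (i : ℕ) - 1 = (a : ℕ) by omega)
  rw [harg]

section Fiber0

variable {n : ℕ} {π : Fin (n+1) → Fin (n+1)}
  (hinv : Function.Involutive π) (hK : (π 0 : ℕ) = 0)

include hinv hK

theorem shrink_val (a : Fin n) :
    (shrink π a : ℕ) + 1 = (π ⟨(a : ℕ) + 1, by have := a.isLt; omega⟩ : ℕ) := by
  have hne : (π ⟨(a : ℕ) + 1, by have := a.isLt; omega⟩ : ℕ) ≠ 0 := by
    intro h0
    have h1 : π ⟨(a : ℕ) + 1, by have := a.isLt; omega⟩ = π 0 := Fin.ext (by omega)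
    have := hinv.injective h1
    have := congrArg Fin.val this
    simp at this
  have hlt := (π ⟨(a : ℕ) + 1, by have := a.isLt; omega⟩).isLt
  show ((π ⟨(a : ℕ) + 1, _⟩ : ℕ) - 1) % n + 1 = _
  rw [Nat.mod_eq_of_lt (by omega)]
  omega

theorem shrink_involutive : Function.Involutive (shrink π) := by
  intro a
  have h1 := shrink_val hinv hK a
  have h2 := shrink_val hinv hK (shrink π a)
  have harg : (⟨(shrink π a : ℕ) + 1, by have := (shrink π a).isLt; omega⟩ : Fin (n+1)) =
      π ⟨(a : ℕ) + 1, by have := a.isLt; omega⟩ := Fin.ext h1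
  rw [harg, hinv] at h2
  exact Fin.ext (by simpa using h2)

theorem contains_shrink : Contains π (shrink π) := by
  refine contains_of_vals (fun a => ⟨(a : ℕ) + 1, by have := a.isLt; omega⟩) ?_ ?_
  · intro a b hab; simpa using hab
  · intro a b
    have h1 := shrink_val hinv hK a
    have h2 := shrink_val hinv hK b
    omega

end Fiber0

theorem ext0_involutive {n : ℕ} (π' : Fin n → Fin n) (hinv : Function.Involutive π') :
    Function.Involutive (ext0 π') := by
  intro i
  rcases Nat.eq_zero_or_pos (i : ℕ) with h | h
  · have e1 := ext0_val_zero π' i h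
    have e2 := ext0_val_zero π' _ e1
    exact Fin.ext (by omega)
  · set a : Fin n := ⟨(i : ℕ) - 1, by have := i.isLt; omega⟩ with hadef
    have ha : (i : ℕ) = (a : ℕ) + 1 := by rw [hadef]; simp; omega
    have e1 := ext0_val_pos π' i a ha
    have e2 := ext0_val_pos π' _ (π' a) e1
    rw [hinv a] at e2
    exact Fin.ext (by omega)

theorem ext0_avoids {n k : ℕ} (π' : Fin n → Fin n) (σ : Fin k → Fin k)
    (hnmf : NMF σ) (hπ' : Avoids π' σ) : Avoids (ext0 π') σ := by
  rintro ⟨f, hf, hc⟩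
  obtain ⟨hk, b, hb⟩ := hnmf
  have hfmono : ∀ a b : Fin k, (a : ℕ) < (b : ℕ) → (f a : ℕ) < f b := by
    intro a b hab; exact hf (by rwa [Fin.lt_def])
  have hf0 : ∀ x : Fin k, 1 ≤ (f x : ℕ) := by
    intro x
    by_contra hle
    push_neg at hle
    -- f x = 0, so x must be the first index, whose pattern value is not minimal
    have hx0 : (x : ℕ) = 0 := by
      by_contra hxx
      have := hfmono ⟨0, hk⟩ x (by simpa using Nat.pos_of_ne_zero hxx)
      omega
    have hxeq : x = ⟨0, hk⟩ := Fin.ext (by simpa using hx0)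
    have hval := (hc b ⟨0, hk⟩).mp (by rwa [Fin.lt_def])
    rw [Fin.lt_def] at hval
    rw [hxeq] at hle
    rw [ext0_val_zero π' (f ⟨0, hk⟩) (by omega)] at hval
    omega
  apply hπ'
  set F : Fin k → Fin n := fun x => ⟨(f x : ℕ) - 1,
    by have := (f x).isLt; have := hf0 x; omega⟩ with hF
  have hFv : ∀ x, (F x : ℕ) = (f x : ℕ) - 1 := fun x => by rw [hF]
  have eF : ∀ x, (ext0 π' (f x) : ℕ) = (π' (F x) : ℕ) + 1 :=
    fun x => ext0_val_pos π' (f x) (F x) (by rw [hFv x]; have := hf0 x; omega)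
  refine contains_of_vals F ?_ ?_
  · intro a b hab
    have := hfmono a b hab; have := hf0 a; have := hf0 b
    rw [hFv a, hFv b]; omega
  · intro a b
    have := hc a b
    rw [Fin.lt_def, Fin.lt_def] at this
    rw [eF a, eF b] at this
    constructor <;> intro <;> omega

/-- The fiber-0 equivalence: first entry fixed at 0. -/
noncomputable def fiber0Equiv (T' : Set ((m : ℕ) × (Fin m → Fin m)))
    (hT' : ∀ s ∈ T', NMF s.2) (n : ℕ) :
    {π : Fin (n+1) → Fin (n+1) //
        (Function.Involutive π ∧ Avoids π pat3412 ∧ AvoidsAll π T') ∧ (π 0 : ℕ) = 0} ≃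
    {π' : Fin n → Fin n // Function.Involutive π' ∧ Avoids π' pat3412 ∧ AvoidsAll π' T'} where
  toFun x := by
    obtain ⟨π, ⟨hinv, hav, hall⟩, hK⟩ := x
    refine ⟨shrink π, shrink_involutive hinv hK, ?_, ?_⟩
    · exact fun hcon => hav (contains_trans (contains_shrink hinv hK) hcon)
    · intro s hs hcon
      exact hall s hs (contains_trans (contains_shrink hinv hK) hcon)
  invFun x := by
    obtain ⟨π', hinv, hav, hall⟩ := x
    refine ⟨ext0 π', ⟨ext0_involutive π' hinv, ext0_avoids π' pat3412 nmf_pat3412 hav, ?_⟩,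
      ext0_val_zero π' 0 rfl⟩
    intro s hs
    exact ext0_avoids π' s.2 (hT' s hs) (hall s hs)
  left_inv := by
    rintro ⟨π, ⟨hinv, hav, hall⟩, hK⟩
    apply Subtype.ext
    funext i
    apply Fin.ext
    show (ext0 (shrink π) i : ℕ) = (π i : ℕ)
    rcases Nat.eq_zero_or_pos (i : ℕ) with h | h
    · rw [ext0_val_zero _ i h]
      have : i = 0 := Fin.ext (by simpa using h)
      rw [this, hK]
    · have hbi := i.isLt
      rw [ext0_val_pos _ i ⟨(i : ℕ) - 1, by omega⟩ (by simp; omega)]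
      have h1 := shrink_val hinv hK ⟨(i : ℕ) - 1, by omega⟩
      have harg : (⟨((⟨(i : ℕ) - 1, by omega⟩ : Fin n) : ℕ) + 1,
          by have := (⟨(i : ℕ) - 1, by omega⟩ : Fin n).isLt; omega⟩ : Fin (n+1)) = i :=
        Fin.ext (by simp; omega)
      rw [harg] at h1
      omega
  right_inv := by
    rintro ⟨π', hinv, hav, hall⟩
    apply Subtype.ext
    funext a
    apply Fin.ext
    show ((ext0 π' ⟨(a : ℕ) + 1, _⟩ : ℕ) - 1) % n = (π' a : ℕ)
    rw [ext0_val_pos π' _ a (by simp)]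
    rw [show ((π' a : ℕ) + 1 - 1) = (π' a : ℕ) by omega]
    exact Nat.mod_eq_of_lt (π' a).isLt

noncomputable def cnt (S : Set ((m : ℕ) × (Fin m → Fin m))) (n : ℕ) : ℕ :=
  Nat.card {π : Fin n → Fin n //
    Function.Involutive π ∧ Avoids π pat3412 ∧ AvoidsAll π S}

theorem cnt_zero (S : Set ((m : ℕ) × (Fin m → Fin m))) (hS : ∀ s ∈ S, s.1 ≠ 0) :
    cnt S 0 = 1 := by
  have hne : Nonempty {π : Fin 0 → Fin 0 //
      Function.Involutive π ∧ Avoids π pat3412 ∧ AvoidsAll π S} := by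
    refine ⟨fun x => x.elim0, fun x => x.elim0, ?_, ?_⟩
    · rintro ⟨f, -, -⟩
      exact (f 0).elim0
    · rintro s hs ⟨f, -, -⟩
      exact (f ⟨0, Nat.pos_of_ne_zero (hS s hs)⟩).elim0
  have hsub : Subsingleton {π : Fin 0 → Fin 0 //
      Function.Involutive π ∧ Avoids π pat3412 ∧ AvoidsAll π S} := by
    constructor
    rintro ⟨f, -⟩ ⟨g, -⟩
    apply Subtype.ext
    funext x
    exact x.elim0
  exact Nat.card_unique

theorem card_fiber_sum (S : Set ((m : ℕ) × (Fin m → Fin m))) (n : ℕ) :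
    cnt S (n+1) = ∑ K : Fin (n+1), Nat.card {π : Fin (n+1) → Fin (n+1) //
      (Function.Involutive π ∧ Avoids π pat3412 ∧ AvoidsAll π S) ∧ π 0 = K} := by
  classical
  set P : (Fin (n+1) → Fin (n+1)) → Prop :=
    fun π => Function.Involutive π ∧ Avoids π pat3412 ∧ AvoidsAll π S with hP
  letI : Fintype {π : Fin (n+1) → Fin (n+1) // P π} := Fintype.ofFinite _
  letI : ∀ K : Fin (n+1), Fintype {π : Fin (n+1) → Fin (n+1) // P π ∧ π 0 = K} :=
    fun K => Fintype.ofFinite _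
  have e : {π : Fin (n+1) → Fin (n+1) // P π} ≃
      (K : Fin (n+1)) × {π : Fin (n+1) → Fin (n+1) // P π ∧ π 0 = K} := by
    refine ((Equiv.sigmaFiberEquiv (fun x : {π // P π} => x.1 0)).symm).trans ?_
    exact Equiv.sigmaCongrRight fun K =>
      Equiv.subtypeSubtypeEquivSubtypeInter P (fun π => π 0 = K)
  rw [cnt, Nat.card_congr e, Nat.card_eq_fintype_card, Fintype.card_sigma]
  exact Finset.sum_congr rfl fun K _ => (Nat.card_eq_fintype_card).symm

theorem card_fiber_pos (T : Set ((m : ℕ) × (Fin m → Fin m))) (n k : ℕ) (hk : k < n) :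
    Nat.card {π : Fin (n+1) → Fin (n+1) //
      (Function.Involutive π ∧ Avoids π pat3412 ∧ AvoidsAll π (kOne '' T)) ∧
        (π 0 : ℕ) = k + 1} = cnt T k * cnt (kOne '' T) (n - 1 - k) := by
  obtain ⟨j, rfl⟩ : ∃ j, n = k + 1 + j := ⟨n - k - 1, by omega⟩
  rw [Nat.card_congr (fiberEquiv T k j), Nat.card_prod]
  rw [show k + 1 + j - 1 - k = j by omega]
  rfl

theorem card_fiber_zero (T : Set ((m : ℕ) × (Fin m → Fin m))) (n : ℕ) :
    Nat.card {π : Fin (n+1) → Fin (n+1) //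
      (Function.Involutive π ∧ Avoids π pat3412 ∧ AvoidsAll π (kOne '' T)) ∧
        (π 0 : ℕ) = 0} = cnt (kOne '' T) n := by
  refine Nat.card_congr (fiber0Equiv (kOne '' T) ?_ n)
  rintro s ⟨t, ht, rfl⟩
  exact nmf_extBoth t.2

theorem card_rec (T : Set ((m : ℕ) × (Fin m → Fin m))) (n : ℕ) :
    cnt (kOne '' T) (n+1) = cnt (kOne '' T) n +
      ∑ k ∈ Finset.range n, cnt T k * cnt (kOne '' T) (n - 1 - k) := by
  rw [card_fiber_sum (kOne '' T) n, Fin.sum_univ_succ]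
  congr 1
  · rw [← card_fiber_zero T n]
    refine Nat.card_congr (Equiv.subtypeEquivRight fun π => ?_)
    have : π 0 = (0 : Fin (n+1)) ↔ (π 0 : ℕ) = 0 := by
      rw [Fin.ext_iff]; simp
    tauto
  · rw [← Fin.sum_univ_eq_sum_range (fun k => cnt T k * cnt (kOne '' T) (n - 1 - k)) n]
    refine Finset.sum_congr rfl fun i _ => ?_
    have hi := i.isLt
    rw [← card_fiber_pos T n (i : ℕ) hi]
    refine Nat.card_congr (Equiv.subtypeEquivRight fun π => ?_)
    have : π 0 = Fin.succ i ↔ (π 0 : ℕ) = (i : ℕ) + 1 := by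
      rw [Fin.ext_iff]; simp
    tauto

theorem cnt_kOne_zero (T : Set ((m : ℕ) × (Fin m → Fin m))) : cnt (kOne '' T) 0 = 1 := by
  refine cnt_zero (kOne '' T) ?_
  rintro s ⟨t, ht, rfl⟩
  simp [kOne]

end S14

/-- for any set `T` of permutations,
`F_{kT1}(x) · (1 - x - x²·F_T(x)) = 1` as formal power series over `ℚ`. -/
theorem stmt14 (T : Set ((m : ℕ) × (Fin m → Fin m)))
    (hT : ∀ s ∈ T, Function.Bijective s.2) :
    FSet (kOne '' T) * (1 - PowerSeries.X - PowerSeries.X ^ 2 * FSet T) = 1 := by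
  have hFS : ∀ S, FSet S = PowerSeries.mk fun n => (S14.cnt S n : ℚ) := fun S => rfl
  have main : FSet (kOne '' T) = 1 + PowerSeries.X ^ 1 * FSet (kOne '' T) +
      PowerSeries.X ^ 2 * (FSet T * FSet (kOne '' T)) := by
    apply PowerSeries.ext
    intro n
    rw [map_add, map_add, PowerSeries.coeff_one, PowerSeries.coeff_X_pow_mul',
      PowerSeries.coeff_X_pow_mul', hFS, hFS, PowerSeries.coeff_mk]
    match n with
    | 0 =>
      simp [S14.cnt_kOne_zero T]
    | 1 =>
      have h := S14.card_rec T 0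
      simp only [Finset.range_zero, Finset.sum_empty, add_zero] at h
      simp [h, PowerSeries.coeff_mk]
    | (n+2) =>
      have h := S14.card_rec T (n+1)
      rw [if_neg (show ¬(n+2 = 0) by omega), if_pos (show 1 ≤ n+2 by omega),
        if_pos (show 2 ≤ n+2 by omega)]
      rw [show n + 2 - 1 = n + 1 by omega, show n + 2 - 2 = n by omega]
      rw [PowerSeries.coeff_mk, PowerSeries.coeff_mul,
        Finset.Nat.sum_antidiagonal_eq_sum_range_succ_mk]
      simp only [PowerSeries.coeff_mk]
      rw [h]
      push_cast
      ring
  linear_combination main
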